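/- The function f(x,y) = ((1-x)/x)·((1-y)/y) is strictly convex on the set C_f = {(x,y) : x>0, y>0, x+y<1, 7x+(18-8√2)y < 3+√2}. -/

import Mathlib

lemma key (x y : ℝ) (hx : 0 < x) (hy : 0 < y) (hxy : x + y < 1)
    (hl : 7 * x + (18 - 8 * Real.sqrt 2) * y < 3 + Real.sqrt 2) :
    1 < 4 * (1 - x) * (1 - y) := by
  have hs : Real.sqrt 2 ^ 2 = 2 := Real.sq_sqrt (by norm_num)
  have hs2 : Real.sqrt 2 < 3/2 := by nlinarith [Real.sqrt_nonneg 2]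
  have hc : (11:ℝ)/8 < Real.sqrt 2 := by nlinarith [Real.sqrt_nonneg 2]
  nlinarith [mul_pos hx hy]

lemma quadpos (x y u v : ℝ) (hx : 0 < x) (hy : 0 < y) (hx1 : x < 1) (hy1 : y < 1)
    (hkey : 1 < 4 * (1 - x) * (1 - y)) (huv : u ≠ 0 ∨ v ≠ 0) :
    0 < 2 * u^2 * (y⁻¹ - 1) / x^3 + 2 * u * v / (x^2 * y^2) + 2 * v^2 * (x⁻¹ - 1) / y^3 := by
  have hyi : 1 < y⁻¹ := by
    have := mul_inv_cancel₀ hy.ne'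
    nlinarith [inv_pos.mpr hy]
  have hxi : 1 < x⁻¹ := by
    have := mul_inv_cancel₀ hx.ne'
    nlinarith [inv_pos.mpr hx]
  have hQ : 2 * u^2 * (y⁻¹ - 1) / x^3 + 2 * u * v / (x^2 * y^2) + 2 * v^2 * (x⁻¹ - 1) / y^3
      = (2 * (u^2 * (1 - y) * y^2 + u * v * (x * y) + v^2 * (1 - x) * x^2)) / (x^3 * y^3) := by
    have hx0 : x ≠ 0 := hx.ne'
    have hy0 : y ≠ 0 := hy.ne'
    field_simp
  rw [hQ]
  apply div_pos _ (by positivity)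
  have hx1' : (0:ℝ) < 1 - x := by linarith
  have hy1' : (0:ℝ) < 1 - y := by linarith
  have hk' : (0:ℝ) < 4 * (1 - x) * (1 - y) - 1 := by linarith
  have hR : 0 < u^2 * (1 - y) * y^2 + u * v * (x * y) + v^2 * (1 - x) * x^2 := by
    rcases huv with hu | hv
    · have hu2 : 0 < u^2 := by positivity
      nlinarith [sq_nonneg (2 * (1 - x) * x^2 * v + x * y * u),
        mul_pos (mul_pos hu2 (mul_pos (pow_pos hx 2) (pow_pos hy 2))) hk',
        mul_pos hx1' (pow_pos hx 2)]
    · have hv2 : 0 < v^2 := by positivity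
      nlinarith [sq_nonneg (2 * (1 - y) * y^2 * u + x * y * v),
        mul_pos (mul_pos hv2 (mul_pos (pow_pos hx 2) (pow_pos hy 2))) hk',
        mul_pos hy1' (pow_pos hy 2)]
  linarith

set_option maxHeartbeats 1000000 in
theorem strictConvexOn_f :
    StrictConvexOn ℝ
      {p : ℝ × ℝ | 0 < p.1 ∧ 0 < p.2 ∧ p.1 + p.2 < 1 ∧
        7 * p.1 + (18 - 8 * Real.sqrt 2) * p.2 < 3 + Real.sqrt 2}
      (fun p : ℝ × ℝ => ((1 - p.1) / p.1) * ((1 - p.2) / p.2)) := by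
  set C : Set (ℝ × ℝ) := {p : ℝ × ℝ | 0 < p.1 ∧ 0 < p.2 ∧ p.1 + p.2 < 1 ∧
        7 * p.1 + (18 - 8 * Real.sqrt 2) * p.2 < 3 + Real.sqrt 2} with hC
  have lin1 : IsLinearMap ℝ (fun p : ℝ × ℝ => p.1) := ⟨fun p q => rfl, fun c p => rfl⟩
  have lin2 : IsLinearMap ℝ (fun p : ℝ × ℝ => p.2) := ⟨fun p q => rfl, fun c p => rfl⟩
  have lin3 : IsLinearMap ℝ (fun p : ℝ × ℝ => p.1 + p.2) :=
    ⟨fun p q => by simp [Prod.fst_add, Prod.snd_add]; ring,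
     fun c p => by simp [smul_eq_mul]; ring⟩
  have lin4 : IsLinearMap ℝ (fun p : ℝ × ℝ => 7 * p.1 + (18 - 8 * Real.sqrt 2) * p.2) :=
    ⟨fun p q => by simp [Prod.fst_add, Prod.snd_add]; ring,
     fun c p => by simp [smul_eq_mul]; ring⟩
  have hconv : Convex ℝ C := by
    have h1 := convex_halfSpace_gt lin1 0
    have h2 := convex_halfSpace_gt lin2 0
    have h3 := convex_halfSpace_lt lin3 1
    have h4 := convex_halfSpace_lt lin4 (3 + Real.sqrt 2)
    have : C = ({p : ℝ × ℝ | 0 < p.1} ∩ {p : ℝ × ℝ | 0 < p.2}) ∩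
        ({p : ℝ × ℝ | p.1 + p.2 < 1} ∩
         {p : ℝ × ℝ | 7 * p.1 + (18 - 8 * Real.sqrt 2) * p.2 < 3 + Real.sqrt 2}) := by
      ext p; simp [hC, and_assoc]
    rw [this]
    exact ((h1.inter h2).inter (h3.inter h4))
  refine ⟨hconv, ?_⟩
  intro p hp q hq hpq a b ha hb hab
  set dx := q.1 - p.1 with hdx
  set dy := q.2 - p.2 with hdy
  set X : ℝ → ℝ := fun t => p.1 + t * dx with hX
  set Y : ℝ → ℝ := fun t => p.2 + t * dy with hY
  set g : ℝ → ℝ := fun t => ((X t)⁻¹ - 1) * ((Y t)⁻¹ - 1) with hg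
  have hmem : ∀ t ∈ Set.Icc (0:ℝ) 1, (X t, Y t) ∈ C := by
    intro t ht
    have h : ((1-t) • p + t • q) = (X t, Y t) := by
      apply Prod.ext <;> simp [hX, hY, hdx, hdy, smul_eq_mul] <;> ring
    rw [← h]
    exact hconv hp hq (by linarith [ht.2]) ht.1 (by ring)
  -- basic facts at points of C
  have hfacts : ∀ t ∈ Set.Icc (0:ℝ) 1, 0 < X t ∧ 0 < Y t ∧ X t < 1 ∧ Y t < 1 ∧
      1 < 4 * (1 - X t) * (1 - Y t) := by
    intro t ht
    obtain ⟨h1, h2, h3, h4⟩ := hmem t ht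
    exact ⟨h1, h2, by linarith, by linarith, key _ _ h1 h2 h3 h4⟩
  -- first derivative
  have hXd : ∀ t : ℝ, HasDerivAt X dx t := fun t => by
    simpa [hX] using ((hasDerivAt_id t).mul_const dx).const_add p.1
  have hYd : ∀ t : ℝ, HasDerivAt Y dy t := fun t => by
    simpa [hY] using ((hasDerivAt_id t).mul_const dy).const_add p.2
  set g1 : ℝ → ℝ := fun t => (-dx / (X t)^2) * ((Y t)⁻¹ - 1)
      + ((X t)⁻¹ - 1) * (-dy / (Y t)^2) with hg1
  have hgd : ∀ t ∈ Set.Icc (0:ℝ) 1, HasDerivAt g (g1 t) t := by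
    intro t ht
    obtain ⟨hXp, hYp, -, -, -⟩ := hfacts t ht
    have hA : HasDerivAt (fun s => (X s)⁻¹ - 1) (-dx / (X t)^2) t := by
      simpa [div_eq_mul_inv] using ((hXd t).inv hXp.ne').sub_const 1
    have hB : HasDerivAt (fun s => (Y s)⁻¹ - 1) (-dy / (Y t)^2) t := by
      simpa [div_eq_mul_inv] using ((hYd t).inv hYp.ne').sub_const 1
    exact hA.mul hB
  -- second derivative
  set g2 : ℝ → ℝ := fun t => 2 * dx^2 * ((Y t)⁻¹ - 1) / (X t)^3
      + 2 * dx * dy / ((X t)^2 * (Y t)^2) + 2 * dy^2 * ((X t)⁻¹ - 1) / (Y t)^3 with hg2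
  have hgd2 : ∀ t ∈ Set.Icc (0:ℝ) 1, HasDerivAt g1 (g2 t) t := by
    intro t ht
    obtain ⟨hXp, hYp, -, -, -⟩ := hfacts t ht
    have hX2 : HasDerivAt (fun s => (X s)^2) (2 * X t * dx) t := by
      refine ((hXd t).pow 2).congr_deriv ?_; norm_num
    have hY2 : HasDerivAt (fun s => (Y s)^2) (2 * Y t * dy) t := by
      refine ((hYd t).pow 2).congr_deriv ?_; norm_num
    have hA : HasDerivAt (fun s => -dx / (X s)^2)
        ((0 * (X t)^2 - -dx * (2 * X t * dx)) / ((X t)^2)^2) t :=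
      (hasDerivAt_const t (-dx)).div hX2 (by positivity)
    have hB : HasDerivAt (fun s => -dy / (Y s)^2)
        ((0 * (Y t)^2 - -dy * (2 * Y t * dy)) / ((Y t)^2)^2) t :=
      (hasDerivAt_const t (-dy)).div hY2 (by positivity)
    have hIA : HasDerivAt (fun s => (X s)⁻¹ - 1) (-dx / (X t)^2) t := by
      simpa [div_eq_mul_inv] using ((hXd t).inv hXp.ne').sub_const 1
    have hIB : HasDerivAt (fun s => (Y s)⁻¹ - 1) (-dy / (Y t)^2) t := by
      simpa [div_eq_mul_inv] using ((hYd t).inv hYp.ne').sub_const 1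
    have := (hA.mul hIB).add (hIA.mul hB)
    refine this.congr_deriv ?_
    symm
    have hx0 : X t ≠ 0 := hXp.ne'
    have hy0 : Y t ≠ 0 := hYp.ne'
    simp only [hg2]
    generalize X t = x at hx0 ⊢
    generalize Y t = y at hy0 ⊢
    field_simp
    ring
  -- strict convexity of g on Icc 0 1
  have hgc : StrictConvexOn ℝ (Set.Icc (0:ℝ) 1) g := by
    apply strictConvexOn_of_deriv2_pos (convex_Icc 0 1)
    · intro t ht
      exact (hgd t ht).continuousAt.continuousWithinAt
    · intro t ht
      rw [interior_Icc] at ht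
      have hd1 : deriv g =ᶠ[nhds t] g1 := by
        filter_upwards [isOpen_Ioo.mem_nhds ht] with s hs
        exact (hgd s (Set.mem_Icc_of_Ioo hs)).deriv
      have : deriv (deriv g) t = g2 t := by
        rw [Filter.EventuallyEq.deriv_eq hd1]
        exact (hgd2 t (Set.mem_Icc_of_Ioo ht)).deriv
      rw [show deriv^[2] g = deriv (deriv g) from rfl, this]
      obtain ⟨h1, h2, h3, h4, h5⟩ := hfacts t (Set.mem_Icc_of_Ioo ht)
      have huv : dx ≠ 0 ∨ dy ≠ 0 := by
        by_contra h
        push_neg at h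
        exact hpq (Prod.ext (by linarith [h.1] : p.1 = q.1) (by linarith [h.2] : p.2 = q.2))
      exact quadpos (X t) (Y t) dx dy h1 h2 h3 h4 h5 huv
  -- conclude
  have hval : ∀ t ∈ Set.Icc (0:ℝ) 1,
      g t = ((1 - X t) / X t) * ((1 - Y t) / Y t) := by
    intro t ht
    obtain ⟨h1, h2, -, -, -⟩ := hfacts t ht
    rw [hg]
    field_simp
  have h01 : (0:ℝ) ∈ Set.Icc (0:ℝ) 1 := by norm_num
  have h11 : (1:ℝ) ∈ Set.Icc (0:ℝ) 1 := by norm_num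
  have hmain := hgc.2 h01 h11 (by norm_num) ha hb hab
  simp only [smul_eq_mul, mul_zero, mul_one, zero_add] at hmain
  have hab' : a = 1 - b := by linarith
  have e0 : g 0 = ((1 - p.1) / p.1) * ((1 - p.2) / p.2) := by
    rw [hval 0 h01]; simp [hX, hY]
  have e1 : g 1 = ((1 - q.1) / q.1) * ((1 - q.2) / q.2) := by
    rw [hval 1 h11]; simp [hX, hY, hdx, hdy]
  have hbI : b ∈ Set.Icc (0:ℝ) 1 := ⟨hb.le, by linarith⟩
  have hx' : X b = (a • p + b • q).1 := by
    simp [hX, hdx, smul_eq_mul, hab']; ring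
  have hy' : Y b = (a • p + b • q).2 := by
    simp [hY, hdy, smul_eq_mul, hab']; ring
  have eb : g b = ((1 - (a • p + b • q).1) / (a • p + b • q).1) *
      ((1 - (a • p + b • q).2) / (a • p + b • q).2) := by
    rw [hval b hbI, hx', hy']
  rw [e0, e1, eb] at hmain
  simpa using hmain
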